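/- For any X in F_q^{m×n} with n ≤ m and ρ ∈ (0,1), the size of the rank-metric ball B_R(X,ρ) is at most K_q^{-1} · q^{mn(ρ + ρb − ρ²b)}, where K_q = ∏_{j≥1}(1 − q^{-j}) and b = n/m. -/

import Mathlib

section Aux
open Module LinearMap



lemma exists_submodule_finrank_eq {K V : Type*} [Field K] [AddCommGroup V] [Module K V]
    [FiniteDimensional K V] (d : ℕ) (hd : d ≤ finrank K V) :
    ∃ W : Submodule K V, finrank K W = d := by
  induction d with
  | zero => exact ⟨⊥, finrank_bot K V⟩
  | succ d ih =>
    obtain ⟨W, hW⟩ := ih (Nat.le_of_succ_le hd)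
    have hWlt : finrank K W < finrank K V := lt_of_lt_of_le (by omega) hd
    obtain ⟨v, hv⟩ := Submodule.exists_of_finrank_lt W hWlt
    have hvW : v ∉ W := by simpa using hv 1 one_ne_zero
    have hv0 : v ≠ 0 := by rintro rfl; exact hvW W.zero_mem
    refine ⟨W ⊔ K ∙ v, ?_⟩
    have hinf : W ⊓ (K ∙ v) = ⊥ := by
      rw [Submodule.eq_bot_iff]
      rintro x ⟨hxW, hxv⟩
      obtain ⟨c, rfl⟩ := Submodule.mem_span_singleton.mp hxv
      rcases eq_or_ne c 0 with rfl | hc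
      · simp
      · exact absurd hxW (mt (fun h => h) (hv c hc))
    have := Submodule.finrank_sup_add_finrank_inf_eq W (K ∙ v)
    rw [hinf, finrank_bot, finrank_span_singleton hv0, hW] at this
    omega

lemma exists_factorization {F : Type*} [Field F] {m n r : ℕ} (M : Matrix (Fin m) (Fin n) F)
    (hr : M.rank ≤ r) (hrn : r ≤ n) :
    ∃ (A : Matrix (Fin m) (Fin r) F) (B : Matrix (Fin r) (Fin n) F)
      (C : Matrix (Fin n) (Fin r) F), M = A * B ∧ B * C = 1 := by
  classical
  set f := M.mulVecLin with hf
  have hker : finrank F (LinearMap.ker f) = n - M.rank := by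
    have := finrank_range_add_finrank_ker f
    rw [Module.finrank_fintype_fun_eq_card, Fintype.card_fin] at this
    have hrank : M.rank = finrank F (LinearMap.range f) := rfl
    omega
  have hle : n - r ≤ finrank F (LinearMap.ker f) := by omega
  obtain ⟨W, hW⟩ := exists_submodule_finrank_eq (n - r) hle
  set K₀ : Submodule F (Fin n → F) := W.map (LinearMap.ker f).subtype with hK₀
  have hK₀le : K₀ ≤ LinearMap.ker f := Submodule.map_subtype_le _ W
  have hK₀rank : finrank F K₀ = n - r := by
    rw [hK₀, Submodule.finrank_map_subtype_eq, hW]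
  have hQ : finrank F ((Fin n → F) ⧸ K₀) = r := by
    have := Submodule.finrank_quotient_add_finrank K₀
    rw [hK₀rank, Module.finrank_fintype_fun_eq_card, Fintype.card_fin] at this
    omega
  have hQr : finrank F ((Fin n → F) ⧸ K₀) = finrank F (Fin r → F) := by
    rw [hQ, Module.finrank_fintype_fun_eq_card, Fintype.card_fin]
  obtain ⟨e⟩ := FiniteDimensional.nonempty_linearEquiv_of_finrank_eq hQr
  set Bl : (Fin n → F) →ₗ[F] (Fin r → F) := (e : _ →ₗ[F] _) ∘ₗ K₀.mkQ with hBl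
  have hBsurj : Function.Surjective Bl := by
    exact e.surjective.comp K₀.mkQ_surjective
  set Al : (Fin r → F) →ₗ[F] (Fin m → F) := (K₀.liftQ f hK₀le) ∘ₗ (e.symm : _ →ₗ[F] _) with hAl
  have hcomp : Al ∘ₗ Bl = f := by
    ext x
    simp [hAl, hBl, Submodule.liftQ_apply]
  obtain ⟨s, hs⟩ := Bl.exists_rightInverse_of_surjective (LinearMap.range_eq_top.2 hBsurj)
  refine ⟨LinearMap.toMatrix' Al, LinearMap.toMatrix' Bl, LinearMap.toMatrix' s, ?_, ?_⟩
  · rw [← LinearMap.toMatrix'_comp, hcomp, hf]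
    rw [← Matrix.toLin'_apply' M, LinearMap.toMatrix'_toLin']
  · rw [← LinearMap.toMatrix'_comp, hs, LinearMap.toMatrix'_id]

lemma card_rank_le_mul (F : Type*) [Field F] [Fintype F] [DecidableEq F] (m n r : ℕ) (hrn : r ≤ n) :
    Nat.card {M : Matrix (Fin m) (Fin n) F // M.rank ≤ r} * Nat.card (GL (Fin r) F) ≤
      Fintype.card F ^ (m * r) * Fintype.card F ^ (r * n) := by
  classical
  have hfact : ∀ M : {M : Matrix (Fin m) (Fin n) F // M.rank ≤ r},
      ∃ ABC : Matrix (Fin m) (Fin r) F × Matrix (Fin r) (Fin n) F × Matrix (Fin n) (Fin r) F,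
        M.1 = ABC.1 * ABC.2.1 ∧ ABC.2.1 * ABC.2.2 = 1 := by
    intro M
    obtain ⟨A, B, C, h1, h2⟩ := exists_factorization M.1 M.2 hrn
    exact ⟨(A, B, C), h1, h2⟩
  choose ABC hAB hBC using hfact
  set Φ : {M : Matrix (Fin m) (Fin n) F // M.rank ≤ r} × GL (Fin r) F →
      Matrix (Fin m) (Fin r) F × Matrix (Fin r) (Fin n) F :=
    fun p => ((ABC p.1).1 * (↑(p.2⁻¹) : Matrix (Fin r) (Fin r) F),
      (↑p.2 : Matrix (Fin r) (Fin r) F) * (ABC p.1).2.1) with hΦ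
  have hinj : Function.Injective Φ := by
    rintro ⟨M, g⟩ ⟨M', g'⟩ h
    simp only [hΦ, Prod.mk.injEq] at h
    obtain ⟨h1, h2⟩ := h
    have hMM : M = M' := by
      have := congrArg₂ (· * ·) h1 h2
      simp only [Matrix.mul_assoc] at this
      have e1 : ∀ (h : GL (Fin r) F) (B : Matrix (Fin r) (Fin n) F),
          (↑(h⁻¹) : Matrix (Fin r) (Fin r) F) * ((↑h : Matrix (Fin r) (Fin r) F) * B) = B := by
        intro h B
        rw [← Matrix.mul_assoc, ← Units.val_mul, inv_mul_cancel, Units.val_one, Matrix.one_mul]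
      rw [e1 g, e1 g', ← hAB M, ← hAB M'] at this
      exact Subtype.ext this
    subst hMM
    refine Prod.ext rfl (Units.ext ?_)
    have := congrArg (· * (ABC M).2.2) h2
    simpa only [Matrix.mul_assoc, hBC, Matrix.mul_one] using this
  calc Nat.card {M : Matrix (Fin m) (Fin n) F // M.rank ≤ r} * Nat.card (GL (Fin r) F)
      = Nat.card ({M : Matrix (Fin m) (Fin n) F // M.rank ≤ r} × GL (Fin r) F) :=
        (Nat.card_prod _ _).symm
    _ ≤ Nat.card (Matrix (Fin m) (Fin r) F × Matrix (Fin r) (Fin n) F) :=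
        Nat.card_le_card_of_injective Φ hinj
    _ = Fintype.card F ^ (m * r) * Fintype.card F ^ (r * n) := by
        rw [Nat.card_prod]
        simp only [Matrix]
        rw [Nat.card_fun, Nat.card_fun, Nat.card_fun, Nat.card_fun]
        simp only [Nat.card_eq_fintype_card, Fintype.card_fin]
        ring


lemma tprod_facts (q : ℕ) (hq : 2 ≤ q) :
    0 < (∏' j : ℕ, (1 - ((q : ℝ))⁻¹ ^ (j + 1))) ∧
      ∀ r : ℕ, (∏' j : ℕ, (1 - ((q : ℝ))⁻¹ ^ (j + 1))) ≤
        ∏ j ∈ Finset.range r, (1 - ((q : ℝ))⁻¹ ^ (j + 1)) := by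
  have hq1 : (1 : ℝ) < q := by exact_mod_cast Nat.lt_of_lt_of_le one_lt_two hq
  have hq0 : (0 : ℝ) < q := by linarith
  set ε : ℕ → ℝ := fun j => ((q : ℝ))⁻¹ ^ (j + 1) with hε
  have hεpos : ∀ j, 0 < ε j := fun j => pow_pos (inv_pos.2 hq0) _
  have hεle : ∀ j, ε j ≤ (2⁻¹ : ℝ) ^ (j + 1) := by
    intro j
    apply pow_le_pow_left₀ (le_of_lt (inv_pos.2 hq0))
    rw [inv_le_inv₀ hq0 (by norm_num)]
    exact_mod_cast hq
  have hεhalf : ∀ j, ε j ≤ 1 / 2 := by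
    intro j
    refine (hεle j).trans ?_
    calc (2⁻¹ : ℝ) ^ (j + 1) ≤ (2⁻¹ : ℝ) ^ 1 :=
          pow_le_pow_of_le_one (by norm_num) (by norm_num) (by omega)
      _ = 1 / 2 := by norm_num
  set u : ℕ → ℝ := fun j => 1 - ε j with hu
  have hupos : ∀ j, 0 < u j := fun j => by have := hεhalf j; simp only [hu]; linarith
  have hule : ∀ j, u j ≤ 1 := fun j => by have := hεpos j; simp only [hu]; linarith
  have huhalf : ∀ j, (1:ℝ)/2 ≤ u j := fun j => by have := hεhalf j; simp only [hu]; linarith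
  set L : ℕ → ℝ := fun j => Real.log (u j) with hL
  have hLnonpos : ∀ j, L j ≤ 0 := fun j => Real.log_nonpos (le_of_lt (hupos j)) (hule j)
  have hLbound : ∀ j, ‖L j‖ ≤ (2⁻¹ : ℝ) ^ j := by
    intro j
    rw [Real.norm_eq_abs, abs_of_nonpos (hLnonpos j), hL, ← Real.log_inv]
    have h1 : Real.log (u j)⁻¹ ≤ (u j)⁻¹ - 1 :=
      Real.log_le_sub_one_of_pos (inv_pos.2 (hupos j))
    have h2 : (u j)⁻¹ - 1 = ε j / u j := by
      field_simp [ne_of_gt (hupos j)]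
      simp [hu]
    have h3 : ε j / u j ≤ 2 * ε j := by
      have hinv : (u j)⁻¹ ≤ 2 := by
        have := inv_anti₀ (by norm_num : (0:ℝ) < 1/2) (huhalf j)
        norm_num at this
        linarith
      calc ε j / u j = ε j * (u j)⁻¹ := div_eq_mul_inv _ _
        _ ≤ ε j * 2 := mul_le_mul_of_nonneg_left hinv (hεpos j).le
        _ = 2 * ε j := by ring
    have h4 : 2 * ε j ≤ (2⁻¹ : ℝ) ^ j := by
      have := hεle j
      have : 2 * ε j ≤ 2 * (2⁻¹ : ℝ) ^ (j + 1) := by linarith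
      calc 2 * ε j ≤ 2 * (2⁻¹ : ℝ) ^ (j + 1) := this
        _ = (2⁻¹ : ℝ) ^ j := by rw [pow_succ]; ring
    linarith
  have hLsummable : Summable L :=
    Summable.of_norm_bounded (summable_geometric_of_lt_one (by norm_num) (by norm_num)) hLbound
  have hexp : Real.exp (∑' j, L j) = ∏' j, u j := by
    exact Real.rexp_tsum_eq_tprod hupos hLsummable
  constructor
  · rw [show (∏' j : ℕ, (1 - ((q : ℝ))⁻¹ ^ (j + 1))) = ∏' j, u j from rfl, ← hexp]
    exact Real.exp_pos _
  · intro r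
    have hsum_le : (∑' j, L j) ≤ ∑ j ∈ Finset.range r, L j := by
      have hns : Summable (fun j => -L j) := hLsummable.neg
      have := Summable.sum_le_tsum (Finset.range r) (fun i _ => by
        simpa using hLnonpos i) hns
      rw [tsum_neg] at this
      have : -∑' j, L j ≥ ∑ j ∈ Finset.range r, -L j := this
      simp only [Finset.sum_neg_distrib] at this
      linarith
    calc (∏' j : ℕ, (1 - ((q : ℝ))⁻¹ ^ (j + 1))) = Real.exp (∑' j, L j) := hexp.symm
      _ ≤ Real.exp (∑ j ∈ Finset.range r, L j) := Real.exp_le_exp.2 hsum_le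
      _ = ∏ j ∈ Finset.range r, Real.exp (L j) := Real.exp_sum _ _
      _ = ∏ j ∈ Finset.range r, (1 - ((q : ℝ))⁻¹ ^ (j + 1)) := by
          refine Finset.prod_congr rfl fun j _ => ?_
          rw [hL, Real.exp_log (hupos j)]

end Aux

open scoped Classical

/-- Upper bound on the size of a rank-metric ball: for `X ∈ F_q^{m×n}` with `n ≤ m`
and `ρ ∈ (0,1)`, `|B_R(X,ρ)| ≤ K_q⁻¹ · q^{mn(ρ + ρb − ρ²b)}` where `b = n/m` and
`K_q = ∏_{j≥1} (1 - q^{-j})`. -/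
theorem ball_upper_bound (q n m : ℕ) (F : Type) [Field F] [Fintype F]
    (hq : Fintype.card F = q) (hn : 0 < n) (hnm : n ≤ m)
    (ρ : ℝ) (hρ : ρ ∈ Set.Ioo (0 : ℝ) 1) (X : Matrix (Fin m) (Fin n) F) :
    (Nat.card {Y : Matrix (Fin m) (Fin n) F // (X - Y).rank ≤ ⌊ρ * n⌋₊} : ℝ) ≤
      (∏' j : ℕ, (1 - ((q : ℝ))⁻¹ ^ (j + 1)))⁻¹ *
        (q : ℝ) ^ (((m : ℝ) * n) * (ρ + ρ * ((n : ℝ) / m) - ρ ^ 2 * ((n : ℝ) / m))) := by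
  classical
  obtain ⟨hρ0, hρ1⟩ := hρ
  set r : ℕ := ⌊ρ * n⌋₊ with hrdef
  have hq2 : 2 ≤ q := by rw [← hq]; exact Fintype.one_lt_card
  have hq0 : (0 : ℝ) < q := by positivity
  have hq1 : (1 : ℝ) ≤ q := by exact_mod_cast Nat.one_le_of_lt hq2
  have hrt : (r : ℝ) ≤ ρ * n := Nat.floor_le (by positivity)
  have hn' : (0 : ℝ) < n := by exact_mod_cast hn
  have htn : ρ * n < n := by nlinarith
  have hrn : r ≤ n := by
    have : (r : ℝ) ≤ n := le_of_lt (lt_of_le_of_lt hrt htn)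
    exact_mod_cast this
  -- step 1: ball card equals card of rank ≤ r matrices
  have hcard_eq : Nat.card {Y : Matrix (Fin m) (Fin n) F // (X - Y).rank ≤ r} =
      Nat.card {M : Matrix (Fin m) (Fin n) F // M.rank ≤ r} := by
    apply Nat.card_congr
    exact Equiv.subtypeEquiv (Equiv.subLeft X) (fun Y => Iff.rfl)
  -- step 2: counting bound
  have hcount := card_rank_le_mul F m n r hrn
  rw [hq] at hcount
  -- step 3: card of GL
  have hGL : Nat.card (GL (Fin r) F) = ∏ i : Fin r, (q ^ r - q ^ (i : ℕ)) := by
    rw [Matrix.card_GL_field, hq]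
  -- step 4: real form of GL card
  set P : ℝ := ∏' j : ℕ, (1 - ((q : ℝ))⁻¹ ^ (j + 1)) with hP
  set Pr : ℝ := ∏ j ∈ Finset.range r, (1 - ((q : ℝ))⁻¹ ^ (j + 1)) with hPr
  obtain ⟨hPpos, hPle⟩ := tprod_facts q hq2
  have hGLreal : ((Nat.card (GL (Fin r) F)) : ℝ) = (q : ℝ) ^ (r * r) * Pr := by
    rw [hGL]
    push_cast [Nat.cast_prod]
    have hcast : ∀ i : Fin r, ((q ^ r - q ^ (i : ℕ) : ℕ) : ℝ)
        = (q : ℝ) ^ r * (1 - ((q : ℝ))⁻¹ ^ (r - (i : ℕ))) := by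
      intro i
      rw [Nat.cast_sub (Nat.pow_le_pow_right (by omega) (le_of_lt i.2))]
      push_cast
      have hqi : (q : ℝ) ^ r * ((q : ℝ))⁻¹ ^ (r - (i : ℕ)) = (q : ℝ) ^ (i : ℕ) := by
        rw [inv_pow, mul_inv_eq_iff_eq_mul₀ (by positivity), ← pow_add]
        congr 1
        omega
      rw [mul_sub, mul_one, hqi]
    rw [Finset.prod_congr rfl (fun i _ => hcast i)]
    rw [Finset.prod_mul_distrib, Finset.prod_const, Finset.card_univ, Fintype.card_fin,
      ← pow_mul]
    congr 1
    rw [Fin.prod_univ_eq_prod_range (fun i => (1 - ((q : ℝ))⁻¹ ^ (r - i))) r]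
    rw [← Finset.prod_range_reflect]
    apply Finset.prod_congr rfl
    intro j hj
    simp only [Finset.mem_range] at hj
    congr 2
    omega
  -- GL card positive
  have hGLpos : (0 : ℝ) < ((Nat.card (GL (Fin r) F)) : ℝ) := by
    have : 0 < Nat.card (GL (Fin r) F) := Nat.card_pos
    exact_mod_cast this
  -- step 6
  have hNb : ((Nat.card {M : Matrix (Fin m) (Fin n) F // M.rank ≤ r}) : ℝ) ≤
      (q : ℝ) ^ (m * r + r * n) / ((q : ℝ) ^ (r * r) * P) := by
    have h1 : ((Nat.card {M : Matrix (Fin m) (Fin n) F // M.rank ≤ r}) : ℝ) *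
        ((Nat.card (GL (Fin r) F)) : ℝ) ≤ (q : ℝ) ^ (m * r + r * n) := by
      rw [pow_add]
      exact_mod_cast hcount
    have h2 : ((Nat.card {M : Matrix (Fin m) (Fin n) F // M.rank ≤ r}) : ℝ) ≤
        (q : ℝ) ^ (m * r + r * n) / ((Nat.card (GL (Fin r) F)) : ℝ) :=
      (le_div_iff₀ hGLpos).2 h1
    refine h2.trans ?_
    apply div_le_div_of_nonneg_left (by positivity) (by positivity)
    rw [hGLreal]
    exact mul_le_mul_of_nonneg_left (hPle r) (by positivity)
  -- step 7: exponent bound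
  have hexp : ((m * r + r * n : ℕ) : ℝ) - ((r * r : ℕ) : ℝ) ≤
      ((m : ℝ) * n) * (ρ + ρ * ((n : ℝ) / m) - ρ ^ 2 * ((n : ℝ) / m)) := by
    have hm0 : (0 : ℝ) < m := by
      have : 0 < m := lt_of_lt_of_le hn hnm
      exact_mod_cast this
    have hrhs : ((m : ℝ) * n) * (ρ + ρ * ((n : ℝ) / m) - ρ ^ 2 * ((n : ℝ) / m)) =
        (ρ * n) * m + (ρ * n) * n - (ρ * n) ^ 2 := by
      field_simp
    rw [hrhs]
    push_cast
    have h1 : (0 : ℝ) ≤ ρ * n - r := by linarith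
    have h2 : (0 : ℝ) ≤ (m : ℝ) + n - (ρ * n) - r := by
      have hnm' : (n : ℝ) ≤ m := by exact_mod_cast hnm
      have hrn' : (r : ℝ) ≤ n := by exact_mod_cast hrn
      linarith
    nlinarith [mul_nonneg h1 h2]
  -- assemble
  calc (Nat.card {Y : Matrix (Fin m) (Fin n) F // (X - Y).rank ≤ ⌊ρ * n⌋₊} : ℝ)
      = ((Nat.card {M : Matrix (Fin m) (Fin n) F // M.rank ≤ r}) : ℝ) := by
        rw [← hrdef, hcard_eq]
    _ ≤ (q : ℝ) ^ (m * r + r * n) / ((q : ℝ) ^ (r * r) * P) := hNb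
    _ = P⁻¹ * ((q : ℝ) ^ (((m * r + r * n : ℕ) : ℝ)) / (q : ℝ) ^ (((r * r : ℕ) : ℝ))) := by
        rw [Real.rpow_natCast, Real.rpow_natCast]
        field_simp
    _ = P⁻¹ * (q : ℝ) ^ (((m * r + r * n : ℕ) : ℝ) - ((r * r : ℕ) : ℝ)) := by
        rw [Real.rpow_sub hq0]
    _ ≤ P⁻¹ * (q : ℝ) ^ (((m : ℝ) * n) * (ρ + ρ * ((n : ℝ) / m) - ρ ^ 2 * ((n : ℝ) / m))) := by
        apply mul_le_mul_of_nonneg_left _ (by positivity)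
        exact Real.rpow_le_rpow_of_exponent_le hq1 hexp
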